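/- With the overlaps p as above and j ∉ {k₁, k₂}, one has X_{k₁j}² (p_{k₁k₁}p_{k₂k₂} − p_{k₁k₂}²) = 2((p_{jj}p_{k₂k₂} − p_{jk₂}²) − (p_{k₁k₁}p_{k₂k₂} − p_{k₁k₂}²)). -/

import Mathlib

/-- The overlap `p_{kℓ} = Σ_{α∈I} u_k(α) u_ℓ(α) − C₀·1_{k=ℓ}` as a function of the
configuration of vectors `u : Fin N → Fin N → ℝ`. -/
def pOv {N : ℕ} (I : Finset (Fin N)) (C₀ : ℝ) (k l : Fin N)
    (u : Fin N → Fin N → ℝ) : ℝ :=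
  (∑ α ∈ I, u k α * u l α) - if k = l then C₀ else 0

/-- The rotation generator `X_{kℓ} = Σ_α (u_k(α) ∂_{u_ℓ(α)} − u_ℓ(α) ∂_{u_k(α)})`
acting on smooth functions of the configuration `u`. -/
noncomputable def XU {N : ℕ} (k l : Fin N) (f : (Fin N → Fin N → ℝ) → ℝ)
    (u : Fin N → Fin N → ℝ) : ℝ :=
  ∑ α : Fin N,
    (u k α * fderiv ℝ f u (Pi.single l (Pi.single α 1))
      - u l α * fderiv ℝ f u (Pi.single k (Pi.single α 1)))

noncomputable def ev {N : ℕ} (k α : Fin N) : (Fin N → Fin N → ℝ) →L[ℝ] ℝ :=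
  (ContinuousLinearMap.proj (R := ℝ) (φ := fun _ : Fin N => ℝ) α).comp
    (ContinuousLinearMap.proj (R := ℝ) (φ := fun _ : Fin N => Fin N → ℝ) k)

lemma ev_apply {N : ℕ} (k α : Fin N) (v : Fin N → Fin N → ℝ) : ev k α v = v k α := rfl

noncomputable def DP {N : ℕ} (I : Finset (Fin N)) (k l : Fin N)
    (u : Fin N → Fin N → ℝ) : (Fin N → Fin N → ℝ) →L[ℝ] ℝ :=
  ∑ α ∈ I, (u k α • ev l α + u l α • ev k α)

lemma hasFDerivAt_ev {N : ℕ} (k α : Fin N) (u : Fin N → Fin N → ℝ) :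
    HasFDerivAt (fun v : Fin N → Fin N → ℝ => v k α) (ev k α) u :=
  (ev k α).hasFDerivAt

lemma hasFDerivAt_pOv {N : ℕ} (I : Finset (Fin N)) (C₀ : ℝ) (k l : Fin N)
    (u : Fin N → Fin N → ℝ) :
    HasFDerivAt (pOv I C₀ k l) (DP I k l u) u := by
  have h : HasFDerivAt (fun v : Fin N → Fin N → ℝ => ∑ α ∈ I, v k α * v l α)
      (DP I k l u) u :=
    HasFDerivAt.fun_sum (fun α _ => (hasFDerivAt_ev k α u).mul (hasFDerivAt_ev l α u))
  have e : pOv I C₀ k l = fun v => (∑ α ∈ I, v k α * v l α) + -(if k = l then C₀ else 0) := by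
    funext v
    simp [pOv, sub_eq_add_neg]
  rw [e]
  exact h.add_const (-(if k = l then C₀ else 0))

lemma fderiv_pOv {N : ℕ} (I : Finset (Fin N)) (C₀ : ℝ) (k l : Fin N)
    (u : Fin N → Fin N → ℝ) :
    fderiv ℝ (pOv I C₀ k l) u = DP I k l u :=
  (hasFDerivAt_pOv I C₀ k l u).fderiv

lemma DP_apply {N : ℕ} (I : Finset (Fin N)) (k l m β : Fin N)
    (u : Fin N → Fin N → ℝ) :
    DP I k l u (Pi.single m (Pi.single β (1:ℝ))) =
      (if l = m ∧ β ∈ I then u k β else 0) + (if k = m ∧ β ∈ I then u l β else 0) := by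
  simp only [DP, ContinuousLinearMap.coe_sum', Finset.sum_apply,
    ContinuousLinearMap.add_apply, ContinuousLinearMap.smul_apply, ev_apply,
    Pi.single_apply, smul_eq_mul]
  rw [Finset.sum_add_distrib]
  congr 1
  · by_cases hl : l = m
    · simp [hl, Pi.single_apply, mul_ite, Finset.sum_ite_eq' I β]
    · simp [hl, Ne.symm hl]
  · by_cases hk : k = m
    · simp [hk, Pi.single_apply, mul_ite, Finset.sum_ite_eq' I β]
    · simp [hk, Ne.symm hk]

/-- `XU` on a combination `A·p_{a₁a₂}p_{b₁b₂} + B·p_{c₁c₂}p_{d₁d₂}` obeys Leibniz. -/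
lemma XU_comb {N : ℕ} (I : Finset (Fin N)) (C₀ : ℝ) (k l : Fin N)
    (A B : ℝ) (a₁ a₂ b₁ b₂ c₁ c₂ d₁ d₂ : Fin N) (u : Fin N → Fin N → ℝ) :
    XU k l (fun v => A * (pOv I C₀ a₁ a₂ v * pOv I C₀ b₁ b₂ v)
        + B * (pOv I C₀ c₁ c₂ v * pOv I C₀ d₁ d₂ v)) u
      = A * (XU k l (pOv I C₀ a₁ a₂) u * pOv I C₀ b₁ b₂ u
            + pOv I C₀ a₁ a₂ u * XU k l (pOv I C₀ b₁ b₂) u)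
        + B * (XU k l (pOv I C₀ c₁ c₂) u * pOv I C₀ d₁ d₂ u
            + pOv I C₀ c₁ c₂ u * XU k l (pOv I C₀ d₁ d₂) u) := by
  have hD : HasFDerivAt (fun v => A * (pOv I C₀ a₁ a₂ v * pOv I C₀ b₁ b₂ v)
        + B * (pOv I C₀ c₁ c₂ v * pOv I C₀ d₁ d₂ v))
      (A • (pOv I C₀ a₁ a₂ u • DP I b₁ b₂ u + pOv I C₀ b₁ b₂ u • DP I a₁ a₂ u)
        + B • (pOv I C₀ c₁ c₂ u • DP I d₁ d₂ u + pOv I C₀ d₁ d₂ u • DP I c₁ c₂ u)) u :=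
    (((hasFDerivAt_pOv I C₀ a₁ a₂ u).mul (hasFDerivAt_pOv I C₀ b₁ b₂ u)).const_mul A).add
      ((((hasFDerivAt_pOv I C₀ c₁ c₂ u).mul (hasFDerivAt_pOv I C₀ d₁ d₂ u)).const_mul B))
  simp only [XU, hD.fderiv, fderiv_pOv, ContinuousLinearMap.add_apply,
    ContinuousLinearMap.smul_apply, smul_eq_mul]
  simp only [Finset.mul_sum, mul_add, add_mul, Finset.sum_mul,
    ← Finset.sum_add_distrib]
  exact Finset.sum_congr rfl fun β _ => by ring

section comp
variable {N : ℕ} (I : Finset (Fin N)) (C₀ : ℝ) (k₁ k₂ j : Fin N)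
  (h : k₁ ≠ k₂) (hj₁ : j ≠ k₁) (hj₂ : j ≠ k₂) (u : Fin N → Fin N → ℝ)

lemma pOv_off (a b : Fin N) (hab : a ≠ b) : pOv I C₀ a b u = ∑ β ∈ I, u a β * u b β := by
  simp [pOv, hab]

include hj₁ in
lemma X11 : XU k₁ j (pOv I C₀ k₁ k₁) u = -2 * pOv I C₀ k₁ j u := by
  have hk₁j : k₁ ≠ j := Ne.symm hj₁
  simp only [XU, fderiv_pOv, DP_apply]
  trans ∑ β : Fin N, (if β ∈ I then -2 * (u k₁ β * u j β) else 0)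
  · exact Finset.sum_congr rfl fun β _ => by
      by_cases hβ : β ∈ I <;> (simp [hβ, hk₁j]; try ring)
  · rw [Finset.sum_ite_mem, Finset.univ_inter, pOv_off I C₀ u k₁ j hk₁j, Finset.mul_sum]

include h hj₂ in
lemma X22 : XU k₁ j (pOv I C₀ k₂ k₂) u = 0 := by
  have h1 : k₂ ≠ j := Ne.symm hj₂
  have h2 : k₂ ≠ k₁ := Ne.symm h
  simp [XU, fderiv_pOv, DP_apply, h1, h2]

include h hj₁ hj₂ in
lemma X12 : XU k₁ j (pOv I C₀ k₁ k₂) u = -pOv I C₀ j k₂ u := by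
  have h1 : k₂ ≠ j := Ne.symm hj₂
  have h2 : k₁ ≠ j := Ne.symm hj₁
  simp only [XU, fderiv_pOv, DP_apply]
  trans ∑ β : Fin N, (if β ∈ I then -(u j β * u k₂ β) else 0)
  · exact Finset.sum_congr rfl fun β _ => by
      by_cases hβ : β ∈ I <;> (simp [hβ, h1, h2, Ne.symm h]; try ring)
  · rw [Finset.sum_ite_mem, Finset.univ_inter, pOv_off I C₀ u j k₂ hj₂]
    simp

include hj₁ in
lemma X1j : XU k₁ j (pOv I C₀ k₁ j) u = pOv I C₀ k₁ k₁ u - pOv I C₀ j j u := by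
  have h2 : k₁ ≠ j := Ne.symm hj₁
  simp only [XU, fderiv_pOv, DP_apply]
  trans ∑ β : Fin N, (if β ∈ I then (u k₁ β * u k₁ β - u j β * u j β) else 0)
  · exact Finset.sum_congr rfl fun β _ => by
      by_cases hβ : β ∈ I <;> (simp [hβ, h2, hj₁]; try ring)
  · rw [Finset.sum_ite_mem, Finset.univ_inter]
    simp [pOv, Finset.sum_sub_distrib]

include h hj₁ hj₂ in
lemma Xj2 : XU k₁ j (pOv I C₀ j k₂) u = pOv I C₀ k₁ k₂ u := by
  have h1 : k₂ ≠ j := Ne.symm hj₂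
  have h2 : k₁ ≠ j := Ne.symm hj₁
  have h3 : k₂ ≠ k₁ := Ne.symm h
  simp only [XU, fderiv_pOv, DP_apply]
  trans ∑ β : Fin N, (if β ∈ I then u k₁ β * u k₂ β else 0)
  · exact Finset.sum_congr rfl fun β _ => by
      by_cases hβ : β ∈ I <;> (simp [hβ, h1, h2, h3, hj₁, hj₂]; try ring)
  · rw [Finset.sum_ite_mem, Finset.univ_inter, pOv_off I C₀ u k₁ k₂ h]

end comp

/-- Jump relation of the Fermionic eigenvector moment flow for the determinant
observable `f(k₁,k₂) = p_{k₁k₁}p_{k₂k₂} − p_{k₁k₂}²`: for `j ∉ {k₁,k₂}`,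
`X_{k₁j}² f(k₁,k₂) = 2 (f(j,k₂) − f(k₁,k₂))`. -/
theorem Xrot_sq_det_jump {N : ℕ} (I : Finset (Fin N)) (C₀ : ℝ)
    (k₁ k₂ j : Fin N) (h : k₁ ≠ k₂) (hj₁ : j ≠ k₁) (hj₂ : j ≠ k₂)
    (u : Fin N → Fin N → ℝ) :
    XU k₁ j (XU k₁ j
        (fun v => pOv I C₀ k₁ k₁ v * pOv I C₀ k₂ k₂ v - (pOv I C₀ k₁ k₂ v) ^ 2)) u
      = 2 * ((pOv I C₀ j j u * pOv I C₀ k₂ k₂ u - (pOv I C₀ j k₂ u) ^ 2)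
        - (pOv I C₀ k₁ k₁ u * pOv I C₀ k₂ k₂ u - (pOv I C₀ k₁ k₂ u) ^ 2)) := by
  have hf : (fun v => pOv I C₀ k₁ k₁ v * pOv I C₀ k₂ k₂ v - (pOv I C₀ k₁ k₂ v) ^ 2)
      = (fun v => (1:ℝ) * (pOv I C₀ k₁ k₁ v * pOv I C₀ k₂ k₂ v)
          + (-1) * (pOv I C₀ k₁ k₂ v * pOv I C₀ k₁ k₂ v)) := by
    funext v; ring
  have hstep : XU k₁ j (fun v => pOv I C₀ k₁ k₁ v * pOv I C₀ k₂ k₂ v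
        - (pOv I C₀ k₁ k₂ v) ^ 2)
      = fun w => (-2:ℝ) * (pOv I C₀ k₁ j w * pOv I C₀ k₂ k₂ w)
          + 2 * (pOv I C₀ k₁ k₂ w * pOv I C₀ j k₂ w) := by
    funext w
    rw [hf, XU_comb, X11 I C₀ k₁ j hj₁ w, X22 I C₀ k₁ k₂ j h hj₂ w,
      X12 I C₀ k₁ k₂ j h hj₁ hj₂ w]
    ring
  rw [hstep, XU_comb, X1j I C₀ k₁ j hj₁ u, X22 I C₀ k₁ k₂ j h hj₂ u,
    X12 I C₀ k₁ k₂ j h hj₁ hj₂ u, Xj2 I C₀ k₁ k₂ j h hj₁ hj₂ u]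
  ring
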